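/- Let E : [0,T] × X → [0,∞) satisfy: E(t,·) is differentiable for every t with continuous differential D_x E, and for every R > 0 there exists c_R ∈ L¹(0,T) nonnegative such that |∂_t E(t,u₂) − ∂_t E(t,u₁)| ≤ c_R(t)‖u₂ − u₁‖ for a.e. t and all u₁, u₂ in the ball B_R. Then for every fixed u ∈ X, the map t ↦ D_x E(t,u) is absolutely continuous on [0,T]; more precisely, ‖D_x E(t,u) − D_x E(s,u)‖_* ≤ ∫_s^t c_R(r) dr for all 0 ≤ s ≤ t ≤ T, where R = ‖u‖ + 1. -/

import Mathlib

open MeasureTheory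

/-- under (E2) (differentiability in `x` with jointly continuous
differential `D_x E`), absolute continuity of `E(·,u)` (encoded by the integral
representation with density `∂_t E = Et`), and the local Lipschitz condition (E4)
on `∂_t E`, the map `t ↦ D_x E(t,u)` is absolutely continuous: for `R = ‖u‖+1`
and any admissible `c = c_R`, `‖D_x E(t,u) − D_x E(s,u)‖ ≤ ∫_s^t c_R(r) dr`. -/
theorem DxE_abs_continuous {X : Type*} [NormedAddCommGroup X] [NormedSpace ℝ X]
    [FiniteDimensional ℝ X]
    (T : ℝ) (hT : 0 < T)
    (E : ℝ → X → ℝ) (Et : ℝ → X → ℝ) (DE : ℝ → X → (X →L[ℝ] ℝ))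
    (hE0 : ∀ t u, 0 ≤ E t u)
    (hdiff : ∀ t ∈ Set.Icc 0 T, ∀ u : X, HasFDerivAt (E t) (DE t u) u)
    (hDEcont : ContinuousOn (fun q : ℝ × X => DE q.1 q.2) (Set.Icc 0 T ×ˢ Set.univ))
    (hEtint : ∀ u : X, IntegrableOn (fun t => Et t u) (Set.Icc 0 T))
    (hAC : ∀ u : X, ∀ s ∈ Set.Icc 0 T, ∀ t ∈ Set.Icc 0 T, s ≤ t →
        E t u - E s u = ∫ r in s..t, Et r u)
    (u : X) (c : ℝ → ℝ)
    (hc0 : ∀ r, 0 ≤ c r)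
    (hcint : IntegrableOn c (Set.Icc 0 T))
    (hlip : ∀ᵐ t ∂(volume.restrict (Set.Icc 0 T)),
        ∀ u₁ ∈ Metric.ball (0 : X) (‖u‖ + 1), ∀ u₂ ∈ Metric.ball (0 : X) (‖u‖ + 1),
          |Et t u₂ - Et t u₁| ≤ c t * ‖u₂ - u₁‖) :
    ∀ s ∈ Set.Icc 0 T, ∀ t ∈ Set.Icc 0 T, s ≤ t →
      ‖DE t u - DE s u‖ ≤ ∫ r in s..t, c r := by
  intro s hs t ht hst
  have hsub : Set.Icc s t ⊆ Set.Icc 0 T := Set.Icc_subset_Icc hs.1 ht.2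
  have huIcc : Set.uIcc s t ⊆ Set.Icc 0 T := by rw [Set.uIcc_of_le hst]; exact hsub
  have huIoc : Set.uIoc s t ⊆ Set.Icc 0 T := by
    rw [Set.uIoc_of_le hst]
    exact fun r hr => ⟨hs.1.trans hr.1.le, hr.2.trans ht.2⟩
  have hcI : IntervalIntegrable c volume s t :=
    (hcint.mono_set huIcc).intervalIntegrable
  have hCnn : 0 ≤ ∫ r in s..t, c r :=
    intervalIntegral.integral_nonneg hst fun r _ => hc0 r
  refine ContinuousLinearMap.opNorm_le_bound _ hCnn fun v => ?_
  -- reduce to a bound on the directional derivative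
  set w : ℝ → X := fun h => u + h • v with hw
  set g : ℝ → ℝ := fun h => E t (w h) - E s (w h) with hg
  have hw0 : w 0 = u := by simp [hw]
  have hline : HasDerivAt w v 0 := by
    simpa [hw] using ((hasDerivAt_id (0 : ℝ)).smul_const v).const_add u
  have hdt : HasDerivAt (fun h : ℝ => E t (w h)) ((DE t u) v) 0 := by
    have hF : HasFDerivAt (E t) (DE t u) (w 0) := by rw [hw0]; exact hdiff t ht u
    exact hF.comp_hasDerivAt 0 hline
  have hds : HasDerivAt (fun h : ℝ => E s (w h)) ((DE s u) v) 0 := by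
    have hF : HasFDerivAt (E s) (DE s u) (w 0) := by rw [hw0]; exact hdiff s hs u
    exact hF.comp_hasDerivAt 0 hline
  have hder : HasDerivAt g ((DE t u) v - (DE s u) v) 0 := hdt.sub hds
  -- the key estimate on difference quotients
  set δ : ℝ := 1 / (‖v‖ + 1) with hδ
  have hvpos : (0 : ℝ) < ‖v‖ + 1 := by positivity
  have hδpos : 0 < δ := by positivity
  have key : ∀ h : ℝ, |h| < δ →
      |g h - g 0| ≤ (∫ r in s..t, c r) * (|h| * ‖v‖) := by
    intro h hh
    have hball : ∀ h' : ℝ, |h'| < δ → w h' ∈ Metric.ball (0 : X) (‖u‖ + 1) := by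
      intro h' hh'
      have h1 : |h'| * (‖v‖ + 1) < 1 := by
        have := mul_lt_mul_of_pos_right hh' hvpos
        rwa [hδ, one_div, inv_mul_cancel₀ (ne_of_gt hvpos)] at this
      have h2 : ‖h' • v‖ < 1 := by
        rw [norm_smul, Real.norm_eq_abs]
        refine lt_of_le_of_lt ?_ h1
        have : (0:ℝ) ≤ |h'| := abs_nonneg _
        nlinarith [norm_nonneg v]
      have : ‖w h'‖ < ‖u‖ + 1 := by
        calc ‖w h'‖ ≤ ‖u‖ + ‖h' • v‖ := norm_add_le _ _
        _ < ‖u‖ + 1 := by linarith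
      simpa [Metric.mem_ball, dist_eq_norm] using this
    have hmem1 : w h ∈ Metric.ball (0 : X) (‖u‖ + 1) := hball h hh
    have hmem0 : u ∈ Metric.ball (0 : X) (‖u‖ + 1) := by
      simp [Metric.mem_ball, dist_eq_norm]
    -- integral representation of g h - g 0
    have hint1 : IntervalIntegrable (fun r => Et r (w h)) volume s t :=
      ((hEtint (w h)).mono_set huIcc).intervalIntegrable
    have hint0 : IntervalIntegrable (fun r => Et r u) volume s t :=
      ((hEtint u).mono_set huIcc).intervalIntegrable
    have hrep : g h - g 0 = ∫ r in s..t, (Et r (w h) - Et r u) := by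
      have e1 := hAC (w h) s hs t ht hst
      have e2 := hAC u s hs t ht hst
      rw [intervalIntegral.integral_sub hint1 hint0, ← e1, ← e2]
      simp [hg, hw0]
    -- a.e. bound
    have hlip' : ∀ᵐ r ∂(volume.restrict (Set.uIoc s t)),
        ‖Et r (w h) - Et r u‖ ≤ c r * (|h| * ‖v‖) := by
      have := ae_restrict_of_ae_restrict_of_subset huIoc hlip
      filter_upwards [this] with r hr
      have := hr u hmem0 (w h) hmem1
      rw [Real.norm_eq_abs]
      refine this.trans (le_of_eq ?_)
      rw [hw]
      simp [norm_smul]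
    have hbound : IntervalIntegrable (fun r => c r * (|h| * ‖v‖)) volume s t :=
      hcI.mul_const _
    have := intervalIntegral.norm_integral_le_abs_of_norm_le hlip' hbound
    rw [hrep]
    rw [Real.norm_eq_abs] at this
    refine this.trans (le_of_eq ?_)
    rw [intervalIntegral.integral_mul_const, abs_of_nonneg]
    positivity
  -- pass to the limit in the difference quotient
  have habs : |(DE t u) v - (DE s u) v| ≤ (∫ r in s..t, c r) * ‖v‖ := by
    rw [hasDerivAt_iff_tendsto_slope] at hder
    have htend : Filter.Tendsto (fun h => |slope g 0 h|) (nhdsWithin 0 {(0:ℝ)}ᶜ)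
        (nhds |(DE t u) v - (DE s u) v|) := hder.abs
    refine le_of_tendsto htend ?_
    have hev : ∀ᶠ h in nhdsWithin (0:ℝ) {(0:ℝ)}ᶜ, |h| < δ := by
      apply eventually_nhdsWithin_of_eventually_nhds
      filter_upwards [Metric.ball_mem_nhds (0:ℝ) hδpos] with h hh
      simpa [Real.dist_eq] using hh
    filter_upwards [hev, self_mem_nhdsWithin] with h h1 h2
    have hk := key h h1
    have hslope : slope g 0 h = (g h - g 0) / h := by
      rw [slope_def_field]
      ring_nf
    rw [hslope, abs_div, div_le_iff₀ (abs_pos.mpr h2)]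
    calc |g h - g 0| ≤ (∫ r in s..t, c r) * (|h| * ‖v‖) := hk
      _ = (∫ r in s..t, c r) * ‖v‖ * |h| := by ring
  have hnorm : ‖(DE t u - DE s u) v‖ = |(DE t u) v - (DE s u) v| := by
    simp [Real.norm_eq_abs]
  rw [hnorm]
  exact habs
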